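/- Let A be a commutative integral domain with quotient field K, and let G₂₂ be an n_Y × n_U matrix over K admitting a double coprime factorization: G₂₂ = D⁻¹ N = Ñ D̃⁻¹ with all of D, N, X, Y, D̃, Ñ, X̃, Ỹ matrices over A, det D, det D̃, det X, det X̃ nonzero, and [[D, -N],[-Ỹ, X̃]] [[X, Ñ],[Y, D̃]] = I. Then for any Λ over A, a matrix Q over K satisfies: [[I],[G₂₂]] Q [G₂₂, I] has all entries in A if and only if Q = D̃ Λ D for some matrix Λ over A. -/
import Mathlib


open Matrix

/-- A matrix over the fraction field of `R` is *stable* if all its entries lie in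
the image of `R`. -/
def stableMat (R : Type*) [CommRing R] {a b : Type*}
    (M : Matrix a b (FractionRing R)) : Prop :=
  ∀ i j, M i j ∈ Set.range (algebraMap R (FractionRing R))

lemma stableMat_mul {R : Type*} [CommRing R] {a b c : Type*} [Fintype b]
    {M : Matrix a b (FractionRing R)} {P : Matrix b c (FractionRing R)}
    (hM : stableMat R M) (hP : stableMat R P) : stableMat R (M * P) := by
  intro i j
  rw [Matrix.mul_apply]
  have : ∀ x : FractionRing R,
      x ∈ Set.range (algebraMap R (FractionRing R)) ↔
      x ∈ (algebraMap R (FractionRing R)).range := fun x => Iff.rfl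
  rw [this]
  exact Subring.sum_mem _ fun k _ =>
    Subring.mul_mem _ ((this _).mp (hM i k)) ((this _).mp (hP k j))

lemma stableMat_sub {R : Type*} [CommRing R] {a b : Type*}
    {M P : Matrix a b (FractionRing R)}
    (hM : stableMat R M) (hP : stableMat R P) : stableMat R (M - P) := by
  intro i j
  obtain ⟨x, hx⟩ := hM i j
  obtain ⟨y, hy⟩ := hP i j
  exact ⟨x - y, by simp [map_sub, hx, hy, Matrix.sub_apply]⟩

lemma stableMat_add {R : Type*} [CommRing R] {a b : Type*}
    {M P : Matrix a b (FractionRing R)}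
    (hM : stableMat R M) (hP : stableMat R P) : stableMat R (M + P) := by
  intro i j
  obtain ⟨x, hx⟩ := hM i j
  obtain ⟨y, hy⟩ := hP i j
  exact ⟨x + y, by simp [map_add, hx, hy, Matrix.add_apply]⟩

/-- Free-parameter characterization (Quadrat): given a double coprime
factorization `G₂₂ = D⁻¹ N = Ñ D̃⁻¹`, a matrix `Q` over the quotient field
satisfies that all entries of `[[I],[G₂₂]] Q [G₂₂, I]` are stable iff
`Q = D̃ Λ D` for some stable `Λ`. -/
theorem free_param_double_coprime {R : Type*} [CommRing R] [IsDomain R]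
    {nY nU : Type*} [Fintype nY] [Fintype nU] [DecidableEq nY] [DecidableEq nU]
    (G₂₂ : Matrix nY nU (FractionRing R))
    (D Xm : Matrix nY nY (FractionRing R))
    (N Nt : Matrix nY nU (FractionRing R))
    (Dt Xt : Matrix nU nU (FractionRing R))
    (Y Yt : Matrix nU nY (FractionRing R))
    (hD : stableMat R D) (hN : stableMat R N) (hX : stableMat R Xm)
    (hY : stableMat R Y) (hDt : stableMat R Dt) (hNt : stableMat R Nt)
    (hXt : stableMat R Xt) (hYt : stableMat R Yt)
    (hdD : D.det ≠ 0) (hdDt : Dt.det ≠ 0) (hdX : Xm.det ≠ 0) (hdXt : Xt.det ≠ 0)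
    (hfac1 : G₂₂ = D⁻¹ * N) (hfac2 : G₂₂ = Nt * Dt⁻¹)
    (hBezout : Matrix.fromBlocks D (-N) (-Yt) Xt *
        Matrix.fromBlocks Xm Nt Y Dt = 1) :
    ∀ Q : Matrix nU nY (FractionRing R),
      (stableMat R (Q * G₂₂) ∧ stableMat R Q ∧
        stableMat R (G₂₂ * Q * G₂₂) ∧ stableMat R (G₂₂ * Q)) ↔
      ∃ Λ : Matrix nU nY (FractionRing R), stableMat R Λ ∧ Q = Dt * Λ * D := by
  have huD : IsUnit D.det := isUnit_iff_ne_zero.mpr hdD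
  have huDt : IsUnit Dt.det := isUnit_iff_ne_zero.mpr hdDt
  have hDinvD : D⁻¹ * D = 1 := Matrix.nonsing_inv_mul D huD
  have hDDinv : D * D⁻¹ = 1 := Matrix.mul_nonsing_inv D huD
  have hDtinvDt : Dt⁻¹ * Dt = 1 := Matrix.nonsing_inv_mul Dt huDt
  have hDtDtinv : Dt * Dt⁻¹ = 1 := Matrix.mul_nonsing_inv Dt huDt
  -- D * G₂₂ = N and G₂₂ * Dt = Nt
  have hDG : D * G₂₂ = N := by
    rw [hfac1, ← Matrix.mul_assoc, hDDinv, Matrix.one_mul]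
  have hGDt : G₂₂ * Dt = Nt := by
    rw [hfac2, Matrix.mul_assoc, hDtinvDt, Matrix.mul_one]
  -- reversed Bezout identity
  have hBezout2 : Matrix.fromBlocks Xm Nt Y Dt *
      Matrix.fromBlocks D (-N) (-Yt) Xt = 1 := mul_eq_one_comm.mp hBezout
  rw [Matrix.fromBlocks_multiply, ← Matrix.fromBlocks_one] at hBezout2
  obtain ⟨h11, -, h21, h22⟩ := Matrix.fromBlocks_inj.mp hBezout2
  -- h11 : Xm * D + Nt * (-Yt) = 1
  -- h21 : Y * D + Dt * (-Yt) = 0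
  -- h22 : Y * (-N) + Dt * Xt = 1
  have hYt' : Dt * Yt = Y * D := by
    rw [Matrix.mul_neg, ← sub_eq_add_neg, sub_eq_zero] at h21
    exact h21.symm
  have hNtYt : Nt * Yt = G₂₂ * Y * D := by
    rw [← hGDt, Matrix.mul_assoc, hYt', ← Matrix.mul_assoc]
  -- D⁻¹ = Xm - G₂₂ * Y
  have hDinv : D⁻¹ = Xm - G₂₂ * Y := by
    refine Matrix.inv_eq_left_inv ?_
    rw [Matrix.sub_mul, ← hNtYt]
    rw [Matrix.mul_neg, ← sub_eq_add_neg] at h11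
    exact h11
  -- Dt⁻¹ = Xt - Yt * G₂₂
  have hYtG : Yt * G₂₂ * Dt = Yt * Nt := by rw [Matrix.mul_assoc, hGDt]
  have hDtinv : Dt⁻¹ = Xt - Yt * G₂₂ := by
    refine Matrix.inv_eq_left_inv ?_
    rw [Matrix.sub_mul, hYtG]
    -- need Xt * Dt - Yt * Nt = 1; from hBezout first identity
    have hB := hBezout
    rw [Matrix.fromBlocks_multiply, ← Matrix.fromBlocks_one] at hB
    obtain ⟨-, -, -, h22'⟩ := Matrix.fromBlocks_inj.mp hB
    -- h22' : -Yt * Nt + Xt * Dt = 1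
    rw [Matrix.neg_mul, neg_add_eq_sub] at h22'
    exact h22'
  intro Q
  constructor
  · rintro ⟨hQG, hQ, hGQG, hGQ⟩
    refine ⟨Dt⁻¹ * Q * D⁻¹, ?_, ?_⟩
    · have hexp : Dt⁻¹ * Q * D⁻¹ =
          Xt * Q * Xm - Xt * (Q * G₂₂) * Y - Yt * (G₂₂ * Q) * Xm
            + Yt * (G₂₂ * Q * G₂₂) * Y := by
        rw [hDinv, hDtinv]
        simp only [Matrix.sub_mul, Matrix.mul_sub, Matrix.mul_assoc]
        abel
      rw [hexp]
      exact stableMat_add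
        (stableMat_sub
          (stableMat_sub (stableMat_mul (stableMat_mul hXt hQ) hX)
            (stableMat_mul (stableMat_mul hXt hQG) hY))
          (stableMat_mul (stableMat_mul hYt hGQ) hX))
        (stableMat_mul (stableMat_mul hYt hGQG) hY)
    · rw [← Matrix.mul_assoc, ← Matrix.mul_assoc, hDtDtinv, Matrix.one_mul,
        Matrix.mul_assoc, hDinvD, Matrix.mul_one]
  · rintro ⟨Λ, hΛ, rfl⟩
    refine ⟨?_, ?_, ?_, ?_⟩
    · have : Dt * Λ * D * G₂₂ = Dt * Λ * N := by rw [Matrix.mul_assoc, hDG]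
      rw [this]
      exact stableMat_mul (stableMat_mul hDt hΛ) hN
    · exact stableMat_mul (stableMat_mul hDt hΛ) hD
    · have : G₂₂ * (Dt * Λ * D) * G₂₂ = Nt * Λ * N := by
        rw [← Matrix.mul_assoc, ← Matrix.mul_assoc, hGDt, Matrix.mul_assoc,
          Matrix.mul_assoc, hDG, ← Matrix.mul_assoc]
      rw [this]
      exact stableMat_mul (stableMat_mul hNt hΛ) hN
    · have : G₂₂ * (Dt * Λ * D) = Nt * Λ * D := by
        rw [← Matrix.mul_assoc, ← Matrix.mul_assoc, hGDt]
      rw [this]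
      exact stableMat_mul (stableMat_mul hNt hΛ) hD
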